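/- Let N be a rooted phylogenetic network on X with vertex set V. Then N is tree-based if and only if there exists an antichain S of vertices of N and a partition of V into |S| chains, each of which forms a directed path in N ending at a leaf in X. -/

import Mathlib

open Relation

/-- Out-degree of a vertex in a digraph given by its arc relation. -/
noncomputable def outDeg {V : Type*} (A : V → V → Prop) (v : V) : ℕ := {u | A v u}.ncard
/-- In-degree of a vertex in a digraph given by its arc relation. -/
noncomputable def inDeg {V : Type*} (A : V → V → Prop) (v : V) : ℕ := {u | A u v}.ncard

/-- A rooted phylogenetic network on leaf set `X`. -/
structure PhyloNet (V : Type*) [Fintype V] [DecidableEq V] where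
  Arc : V → V → Prop
  root : V
  X : Finset V
  acyclic : ∀ v, ¬ Relation.TransGen Arc v v
  reach : ∀ v, Relation.ReflTransGen Arc root v
  root_out : 1 ≤ outDeg Arc root
  leaf_iff : ∀ v, v ∈ X ↔ outDeg Arc v = 0
  leaf_in : ∀ v ∈ X, inDeg Arc v = 1
  internal : ∀ v, v ≠ root → v ∉ X →
    (inDeg Arc v = 1 ∧ 2 ≤ outDeg Arc v) ∨ (2 ≤ inDeg Arc v ∧ outDeg Arc v = 1)

section Defs
variable {V : Type*} [Fintype V] [DecidableEq V]

/-- A reticulation: in-degree at least two. -/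
def IsRetic (N : PhyloNet V) (v : V) : Prop := 2 ≤ inDeg N.Arc v
/-- A tree vertex: a non-leaf vertex of in-degree at most one. -/
def IsTreeVert (N : PhyloNet V) (v : V) : Prop := v ∉ N.X ∧ inDeg N.Arc v ≤ 1
/-- An omnian: a non-leaf vertex all of whose children are reticulations. -/
def IsOmnian (N : PhyloNet V) (v : V) : Prop := v ∉ N.X ∧ ∀ u, N.Arc v u → IsRetic N u
/-- A binary network: all in- and out-degrees are at most two. -/
def IsBinary (N : PhyloNet V) : Prop := ∀ v : V, inDeg N.Arc v ≤ 2 ∧ outDeg N.Arc v ≤ 2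

/-- A rooted spanning tree of `N` with the same root as `N`. -/
def IsRSTree (N : PhyloNet V) (T : V → V → Prop) : Prop :=
  (∀ u v, T u v → N.Arc u v) ∧ (∀ v, inDeg T v = 0 ↔ v = N.root) ∧
  (∀ v, v ≠ N.root → inDeg T v = 1)

/-- A support tree: a rooted spanning tree with the same root, all of whose leaves are in `X`. -/
def IsSupportTree (N : PhyloNet V) (T : V → V → Prop) : Prop :=
  IsRSTree N T ∧ ∀ v, outDeg T v = 0 → v ∈ N.X

/-- Tree-based network. -/
def TreeBased (N : PhyloNet V) : Prop := ∃ T, IsSupportTree N T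

/-- A (nonempty, repetition-free) directed path recorded as a list of vertices. -/
def IsPathIn (A : V → V → Prop) (p : List V) : Prop := p ≠ [] ∧ p.Chain' A ∧ p.Nodup
/-- The path ends at a vertex of `X`. -/
def EndsIn (X : Finset V) (p : List V) : Prop := ∃ x ∈ X, p.getLast? = some x
/-- Pairwise vertex-disjoint family of paths. -/
def PairwiseDisj (P : Finset (List V)) : Prop :=
  ∀ p ∈ P, ∀ q ∈ P, p ≠ q → ∀ v : V, v ∈ p → v ∉ q
/-- A partition of the vertex set of `N` into vertex-disjoint directed paths
ending at leaves in `X`. -/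
def IsPathPartition (N : PhyloNet V) (P : Finset (List V)) : Prop :=
  (∀ p ∈ P, IsPathIn N.Arc p ∧ EndsIn N.X p) ∧ PairwiseDisj P ∧ ∀ v : V, ∃ p ∈ P, v ∈ p

/-- A matching in the bipartite graph with edge set `E` (edges from a first copy of `V`
to a second copy of `V`), recorded as a set of edges no two of which share an endpoint. -/
def IsMatchingOn (E : V → V → Prop) (M : Finset (V × V)) : Prop :=
  (∀ e ∈ M, E e.1 e.2) ∧ ∀ e ∈ M, ∀ f ∈ M, (e.1 = f.1 ∨ e.2 = f.2) → e = f

/-- Size of a maximum matching of the bipartite graph with edge set `E`. -/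
noncomputable def maxMatching (E : V → V → Prop) : ℕ :=
  sSup {n | ∃ M : Finset (V × V), IsMatchingOn E M ∧ M.card = n}

/-- An antichain of vertices of `N`. -/
def AntichainIn (N : PhyloNet V) (S : Finset V) : Prop :=
  ∀ u ∈ S, ∀ v ∈ S, u ≠ v → ¬ Relation.TransGen N.Arc u v

/-- The antichain-to-leaf property: from every antichain there are pairwise
vertex-disjoint directed paths to leaves, one starting at each antichain element. -/
def AntichainToLeaf (N : PhyloNet V) : Prop :=
  ∀ S : Finset V, AntichainIn N S →
    ∃ f : V → List V,
      (∀ s ∈ S, IsPathIn N.Arc (f s) ∧ (f s).head? = some s ∧ EndsIn N.X (f s)) ∧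
      ∀ s ∈ S, ∀ t ∈ S, s ≠ t → ∀ v : V, v ∈ f s → v ∉ f t

/-- A temporal network: a real labelling strictly increasing along tree arcs and
constant along reticulation arcs. -/
def Temporal (N : PhyloNet V) : Prop :=
  ∃ l : V → ℝ, ∀ u v, N.Arc u v →
    (IsRetic N v → l u = l v) ∧ (¬ IsRetic N v → l u < l v)

/-- `N'` is a binary refinement of `N`, witnessed by the contraction map `φ`:
`N` is obtained from the binary network `N'` by contracting the arcs whose endpoints
are identified by `φ`. -/
def IsBinRefinement {V' : Type*} [Fintype V'] [DecidableEq V']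
    (N' : PhyloNet V') (N : PhyloNet V) (φ : V' → V) : Prop :=
  IsBinary N' ∧ Function.Surjective φ ∧ φ N'.root = N.root ∧
  N'.X.image φ = N.X ∧ Set.InjOn φ ↑N'.X ∧
  (∀ u v : V, N.Arc u v ↔ ∃ u' v', φ u' = u ∧ φ v' = v ∧ N'.Arc u' v' ∧ φ u' ≠ φ v') ∧
  (∀ a b : V', φ a = φ b →
    Relation.ReflTransGen (fun x y => (N'.Arc x y ∨ N'.Arc y x) ∧ φ x = φ y) a b)

/-- Edge of the bipartite graph `B_N` between omnians and reticulations. -/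
def BEdge (N : PhyloNet V) (o r : V) : Prop := IsOmnian N o ∧ IsRetic N r ∧ N.Arc o r
/-- Edge of the bipartite graph `Z_N` between tree vertices with a reticulation child
and reticulations. -/
def ZEdge (N : PhyloNet V) (t r : V) : Prop :=
  IsTreeVert N t ∧ (∃ r', N.Arc t r' ∧ IsRetic N r') ∧ IsRetic N r ∧ N.Arc t r

/-- `R_t`: reticulations with no reticulation parent. -/
def Rt (N : PhyloNet V) (v : V) : Prop := IsRetic N v ∧ ∀ u, N.Arc u v → ¬ IsRetic N u
/-- `Q_t`: vertices with a child in `R_t`. -/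
def Qt (N : PhyloNet V) (v : V) : Prop := ∃ r, N.Arc v r ∧ Rt N r
/-- Edge of the bipartite graph `J_N`. -/
def JEdge (N : PhyloNet V) (q r : V) : Prop := Qt N q ∧ Rt N r ∧ N.Arc q r

/-- A supporting set for `J_N`. -/
def IsSupportingSet (N : PhyloNet V) (E : Finset (V × V)) : Prop :=
  (∀ e ∈ E, JEdge N e.1 e.2) ∧
  (∀ q, Qt N q → IsOmnian N q → ∃ e ∈ E, e.1 = q) ∧
  (∀ r, Rt N r → ∃! e : V × V, e ∈ E ∧ e.2 = r)

/-- An arboreal arc: `u` is a reticulation, or `v` is a tree vertex or a leaf. -/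
def ArborealArc (N : PhyloNet V) (u v : V) : Prop :=
  N.Arc u v ∧ (IsRetic N u ∨ ¬ IsRetic N v)

/-- The number of support trees of `N`, identified with their arc sets. -/
noncomputable def supCount (N : PhyloNet V) : ℕ :=
  {A' : Finset (V × V) | IsSupportTree N (fun u v => (u, v) ∈ A')}.ncard

/-- The bipartite graph `J_N`, as a simple graph on `Q_t ∪ R_t`. -/
def Jgraph (N : PhyloNet V) : SimpleGraph {v : V // Qt N v ∨ Rt N v} where
  Adj a b := JEdge N a.1 b.1 ∨ JEdge N b.1 a.1
  symm := by constructor; intro a b h; tauto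
  loopless := by
    constructor
    rintro a (⟨_, _, h⟩ | ⟨_, _, h⟩) <;> exact N.acyclic _ (Relation.TransGen.single h)

/-- Degree in `J_N`. -/
noncomputable def Jdeg (N : PhyloNet V) (a : {v : V // Qt N v ∨ Rt N v}) : ℕ :=
  ((Jgraph N).neighborSet a).ncard

end Defs

/-- A rooted tree (equivalently, a subdivision of a rooted tree): a rooted digraph
in which every non-root vertex has in-degree one and everything is reachable
from the root. -/
structure RootedDirTree (V : Type*) [Fintype V] [DecidableEq V] where
  Arc : V → V → Prop
  root : V
  acyclic : ∀ v, ¬ Relation.TransGen Arc v v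
  reach : ∀ v, Relation.ReflTransGen Arc root v
  root_in : inDeg Arc root = 0
  in_one : ∀ v, v ≠ root → inDeg Arc v = 1


set_option linter.unusedSectionVars false

section AuxForStmt5

variable {V : Type*}

private lemma infix_pair' {A : V → V → Prop} {p : List V} (hc : p.Chain' A) {u v : V}
    (h : [u, v] <:+: p) : A u v := by
  have := hc.infix h
  simpa using this

private lemma last_or_succ' {p : List V} {v : V} (hv : v ∈ p) :
    p.getLast? = some v ∨ ∃ w, [v, w] <:+: p := by
  induction p with
  | nil => simp at hv
  | cons a t ih =>
    cases t with
    | nil =>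
      simp at hv; subst hv; left; simp
    | cons b t' =>
      rcases List.mem_cons.mp hv with rfl | hv'
      · right
        exact ⟨b, ⟨[], t', rfl⟩⟩
      · rcases ih hv' with h | ⟨w, hw⟩
        · left; rw [List.getLast?_cons_cons]; exact h
        · right; exact ⟨w, List.infix_cons_iff.mpr (Or.inr hw)⟩

private lemma pair_prefix' {u v a : V} {t : List V} (h : [u, v] <+: a :: t) :
    u = a ∧ ∃ r, t = v :: r := by
  obtain ⟨r, hr⟩ := h
  simp only [List.cons_append, List.nil_append, List.cons.injEq] at hr
  exact ⟨hr.1, r, hr.2.symm⟩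

private lemma pred_unique' : ∀ {p : List V}, p.Nodup → ∀ {u u' v : V},
    [u, v] <:+: p → [u', v] <:+: p → u = u' := by
  intro p
  induction p with
  | nil =>
    intro _ u u' v h _
    have : u ∈ ([] : List V) := h.subset (List.mem_cons_self (a := u) (l := [v]))
    simp at this
  | cons a t ih =>
    intro hnd u u' v h1 h2
    have hvr : ∀ {x : V} {r : List V}, t = v :: r → [x, v] <:+: t → False := by
      intro x r hr hx
      have hndt : t.Nodup := (List.nodup_cons.mp hnd).2
      rw [hr] at hndt
      have hvnr : v ∉ r := (List.nodup_cons.mp hndt).1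
      rcases List.infix_cons_iff.mp (hr ▸ hx) with hp | hi
      · obtain ⟨heq, r', hr'⟩ := pair_prefix' hp
        exact hvnr (hr' ▸ List.mem_cons_self (a := v) (l := r'))
      · exact hvnr (hi.subset (by simp))
    rcases List.infix_cons_iff.mp h1 with hp1 | hi1 <;>
      rcases List.infix_cons_iff.mp h2 with hp2 | hi2
    · rw [(pair_prefix' hp1).1, (pair_prefix' hp2).1]
    · obtain ⟨_, r, hr⟩ := pair_prefix' hp1
      exact absurd hi2 (fun h => hvr hr h)
    · obtain ⟨_, r, hr⟩ := pair_prefix' hp2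
      exact absurd hi1 (fun h => hvr hr h)
    · exact ih (List.Nodup.of_cons hnd) hi1 hi2

private lemma chain'_nodup' {T : V → V → Prop} (hirr : ∀ v, ¬ Relation.TransGen T v v)
    {l : List V} (hc : l.Chain' T) : l.Nodup := by
  have hc' : l.Chain' (Relation.TransGen T) :=
    hc.imp (fun a b h => Relation.TransGen.single h)
  haveI : IsTrans V (Relation.TransGen T) := ⟨fun _ _ _ => Relation.TransGen.trans⟩
  have hp := List.isChain_iff_pairwise.mp hc'
  exact hp.imp (fun {a b} h hab => by subst hab; exact hirr a h)

variable [DecidableEq V]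

private def chainL (X : Finset V) (g : V → V) : ℕ → V → List V
  | 0, v => [v]
  | n + 1, v => if v ∈ X then [v] else v :: chainL X g n (g v)

private lemma chainL_ne (X : Finset V) (g : V → V) (n : ℕ) (v : V) :
    chainL X g n v ≠ [] := by
  cases n with
  | zero => simp [chainL]
  | succ n =>
    by_cases h : v ∈ X <;> simp [chainL, h]

private lemma chainL_head? (X : Finset V) (g : V → V) (n : ℕ) (v : V) :
    (chainL X g n v).head? = some v := by
  cases n with
  | zero => simp [chainL]
  | succ n =>
    by_cases h : v ∈ X <;> simp [chainL, h]

private lemma chainL_chain' (X : Finset V) (g : V → V) :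
    ∀ (n : ℕ) (v : V), (chainL X g n v).Chain' (fun x y => x ∉ X ∧ y = g x)
  | 0, v => by simp [chainL, List.Chain', List.isChain_singleton]
  | n + 1, v => by
    by_cases h : v ∈ X
    · simp [chainL, h, List.Chain', List.isChain_singleton]
    · simp only [chainL, if_neg h]
      refine List.isChain_cons.mpr ⟨?_, chainL_chain' X g n (g v)⟩
      intro y hy
      rw [chainL_head?] at hy
      exact ⟨h, (Option.some_inj.mp hy).symm⟩

private lemma getLast?_cons_of_ne {a : V} {l : List V} (h : l ≠ []) :
    (a :: l).getLast? = l.getLast? := by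
  cases l with
  | nil => exact absurd rfl h
  | cons b t => exact List.getLast?_cons_cons

private lemma chainL_len (X : Finset V) (g : V → V) :
    ∀ (n : ℕ) (v : V), (∀ x, (chainL X g n v).getLast? = some x → x ∉ X) →
      (chainL X g n v).length = n + 1
  | 0, v, _ => by simp [chainL]
  | n + 1, v, h => by
    by_cases hv : v ∈ X
    · exact absurd hv (h v (by simp [chainL, hv]))
    · have hrw : chainL X g (n + 1) v = v :: chainL X g n (g v) := by
        simp [chainL, hv]
      have hlast : (chainL X g (n + 1) v).getLast? = (chainL X g n (g v)).getLast? := by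
        rw [hrw]; exact getLast?_cons_of_ne (chainL_ne X g n (g v))
      have := chainL_len X g n (g v) (fun x hx => h x (by rw [hlast]; exact hx))
      rw [hrw, List.length_cons, this]

private lemma step_next' {X : Finset V} {g : V → V} :
    ∀ {l : List V}, l.Chain' (fun x y => x ∉ X ∧ y = g x) →
      (∀ x, l.getLast? = some x → x ∈ X) → ∀ u ∈ l, u ∉ X → g u ∈ l := by
  intro l
  induction l with
  | nil => simp
  | cons a t ih =>
    intro hc hl u hu hux
    cases t with
    | nil =>
      simp only [List.mem_singleton] at hu
      subst hu
      exact absurd (hl u (by simp)) hux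
    | cons b t' =>
      have hcc := List.isChain_cons_cons.mp hc
      rcases List.mem_cons.mp hu with rfl | hu'
      · rw [← hcc.1.2]; simp
      · exact List.mem_cons_of_mem _
          (ih hcc.2 (fun x hx => hl x (by rw [List.getLast?_cons_cons]; exact hx)) u hu' hux)

private lemma step_prev' {X : Finset V} {g : V → V} :
    ∀ {l : List V}, l.Chain' (fun x y => x ∉ X ∧ y = g x) →
      ∀ v ∈ l, l.head? = some v ∨ ∃ u ∈ l, u ∉ X ∧ g u = v := by
  intro l
  induction l with
  | nil => simp
  | cons a t ih =>
    intro hc v hv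
    rcases List.mem_cons.mp hv with rfl | hv'
    · left; rfl
    · cases t with
      | nil => simp at hv'
      | cons b t' =>
        have hcc := List.isChain_cons_cons.mp hc
        rcases ih hcc.2 v hv' with h | ⟨u, hu, hux, hgu⟩
        · right
          refine ⟨a, by simp, hcc.1.1, ?_⟩
          rw [← hcc.1.2]
          exact (Option.some_inj.mp h)
        · right; exact ⟨u, List.mem_cons_of_mem _ hu, hux, hgu⟩

end AuxForStmt5

private lemma pathPartition_card' {V : Type*} [Fintype V] [DecidableEq V] (N : PhyloNet V)
    (P : Finset (List V)) (hPP : IsPathPartition N P) : P.card = N.X.card := by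
  classical
  obtain ⟨hpaths, hdisj, hcov⟩ := hPP
  have hleafN : ∀ x ∈ N.X, ∀ w, ¬ N.Arc x w := by
    intro x hx w hw
    have h0 : {u | N.Arc x u}.ncard = 0 := (N.leaf_iff x).mp hx
    have he := (Set.ncard_eq_zero (Set.toFinite _)).mp h0
    exact Set.eq_empty_iff_forall_notMem.mp he w hw
  have hE : ∀ p ∈ P, ∃ x, x ∈ N.X ∧ p.getLast? = some x := fun p hp => (hpaths p hp).2
  refine Finset.card_bij (fun p hp => (hE p hp).choose) ?_ ?_ ?_
  · intro p hp
    exact (hE p hp).choose_spec.1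
  · intro p hp q hq heq
    by_contra hne
    have heq' : (hE p hp).choose = (hE q hq).choose := heq
    have hxp := List.mem_of_getLast? (hE p hp).choose_spec.2
    have hxq := List.mem_of_getLast? (hE q hq).choose_spec.2
    rw [← heq'] at hxq
    exact hdisj p hp q hq hne _ hxp hxq
  · intro x hx
    obtain ⟨p, hp, hxp⟩ := hcov x
    refine ⟨p, hp, ?_⟩
    rcases last_or_succ' hxp with hl | ⟨w, hw⟩
    · show (hE p hp).choose = x
      have hh := (hE p hp).choose_spec.2
      exact Option.some_inj.mp (hh.symm.trans hl)
    · exact absurd (infix_pair' (hpaths p hp).1.2.1 hw) (hleafN x hx w)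

/-- tree-based iff there is an antichain `S` and a partition of the
vertex set into `|S|` chains, each forming a path in `N` ending at a leaf in `X`. -/
theorem stmt5 {V : Type*} [Fintype V] [DecidableEq V] (N : PhyloNet V) :
    TreeBased N ↔
      ∃ S : Finset V, AntichainIn N S ∧
        ∃ P : Finset (List V), IsPathPartition N P ∧ P.card = S.card := by
  classical
  constructor
  · rintro ⟨T, ⟨hTA, hTin0, hTin1⟩, hTsupp⟩
    have hirr : ∀ v, ¬ Relation.TransGen T v v := fun v h =>
      N.acyclic v (Relation.TransGen.mono hTA _ _ h)
    have hout : ∀ v, v ∉ N.X → ∃ u, T v u := by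
      intro v hv
      by_contra h
      push_neg at h
      refine hv (hTsupp v ?_)
      have he : {u | T v u} = ∅ := Set.eq_empty_iff_forall_notMem.mpr h
      show {u | T v u}.ncard = 0
      rw [he]
      exact Set.ncard_empty _
    obtain ⟨g, hg⟩ : ∃ g : V → V, ∀ v, v ∉ N.X → T v (g v) := by
      refine ⟨fun v => if h : ∃ u, T v u then h.choose else v, fun v hv => ?_⟩
      have h := hout v hv
      beta_reduce
      rw [dif_pos h]
      exact h.choose_spec
    obtain ⟨c, hceq⟩ : ∃ c : V → List V, ∀ v, c v = chainL N.X g (Fintype.card V) v :=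
      ⟨_, fun _ => rfl⟩
    have hchain : ∀ v, (c v).Chain' (fun x y => x ∉ N.X ∧ y = g x) := fun v => by
      rw [hceq]; exact chainL_chain' N.X g (Fintype.card V) v
    have hchainT : ∀ v, (c v).Chain' T :=
      fun v => (hchain v).imp (fun a b (h : a ∉ N.X ∧ b = g a) => h.2 ▸ hg a h.1)
    have hnodup : ∀ v, (c v).Nodup := fun v => chain'_nodup' hirr (hchainT v)
    have hne : ∀ v, c v ≠ [] := fun v => by
      rw [hceq]; exact chainL_ne N.X g (Fintype.card V) v
    have hhead : ∀ v, (c v).head? = some v := fun v => by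
      rw [hceq]; exact chainL_head? N.X g (Fintype.card V) v
    have hmemself : ∀ v, v ∈ c v :=
      fun v => List.mem_of_mem_head? (Option.mem_def.mpr (hhead v))
    have hlast : ∀ v, ∃ x ∈ N.X, (c v).getLast? = some x := by
      intro v
      obtain ⟨x, hx⟩ : ∃ x, (c v).getLast? = some x := by
        cases hcv : c v with
        | nil => exact absurd hcv (hne v)
        | cons a t =>
          exact ⟨(a :: t).getLast (List.cons_ne_nil a t),
            List.getLast?_eq_getLast (List.cons_ne_nil a t)⟩
      refine ⟨x, ?_, hx⟩
      by_contra hxX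
      have hlen : (c v).length = Fintype.card V + 1 := by
        rw [hceq v]
        refine chainL_len N.X g (Fintype.card V) v (fun y hy => ?_)
        rw [← hceq v, hx] at hy
        exact (Option.some_inj.mp hy) ▸ hxX
      have hle := (hnodup v).length_le_card
      omega
    obtain ⟨starts, hstarts⟩ : ∃ s : Finset V, ∀ v, v ∈ s ↔ ∀ u, u ∉ N.X → g u ≠ v :=
      ⟨Finset.univ.filter (fun v => ∀ u, u ∉ N.X → g u ≠ v), fun v => by
        simp [Finset.mem_filter]⟩
    have wf : WellFounded (fun u v : V => Relation.TransGen N.Arc u v) := by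
      haveI h1 : IsTrans V (fun u v : V => Relation.TransGen N.Arc u v) :=
        ⟨fun _ _ _ hab hbc => Relation.TransGen.trans hab hbc⟩
      haveI h2 : IsIrrefl V (fun u v : V => Relation.TransGen N.Arc u v) := ⟨N.acyclic⟩
      exact Finite.wellFounded_of_trans_of_irrefl _
    have cover : ∀ v, ∃ s ∈ starts, v ∈ c s := by
      have key : ∀ v, (∀ u, Relation.TransGen N.Arc u v → ∃ s ∈ starts, u ∈ c s) →
          ∃ s ∈ starts, v ∈ c s := by
        intro v ih
        by_cases hs : v ∈ starts
        · exact ⟨v, hs, hmemself v⟩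
        · have hs' : ∃ u, u ∉ N.X ∧ g u = v := by
            rw [hstarts] at hs
            push_neg at hs
            exact hs
          obtain ⟨u, huX, hgu⟩ := hs'
          have hTuv : T u v := hgu ▸ hg u huX
          obtain ⟨s, hsS, hus⟩ := ih u (Relation.TransGen.single (hTA u v hTuv))
          obtain ⟨x, hxX, hxl⟩ := hlast s
          have hlX : ∀ y, (c s).getLast? = some y → y ∈ N.X := by
            intro y hy
            rw [hxl] at hy
            exact (Option.some_inj.mp hy) ▸ hxX
          have hnext := step_next' (hchain s) hlX u hus huX
          exact ⟨s, hsS, hgu ▸ hnext⟩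
      exact fun v => wf.induction v key
    have hrootIn : {w | T w N.root} = ∅ := by
      have h0 : inDeg T N.root = 0 := (hTin0 N.root).mpr rfl
      exact (Set.ncard_eq_zero (Set.toFinite _)).mp h0
    have hTuniq : ∀ v u u', T u v → T u' v → u = u' := by
      intro v u u' h1 h2
      have hvroot : v ≠ N.root := by
        rintro rfl
        exact Set.eq_empty_iff_forall_notMem.mp hrootIn u h1
      have hone : ({w | T w v}).ncard = 1 := hTin1 v hvroot
      obtain ⟨a, ha⟩ := Set.ncard_eq_one.mp hone
      have h1' : u ∈ {w | T w v} := h1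
      have h2' : u' ∈ {w | T w v} := h2
      rw [ha, Set.mem_singleton_iff] at h1' h2'
      rw [h1', h2']
    have disj : ∀ v, ∀ s ∈ starts, ∀ s' ∈ starts, v ∈ c s → v ∈ c s' → s = s' := by
      have key : ∀ v, (∀ u, Relation.TransGen N.Arc u v →
          ∀ s ∈ starts, ∀ s' ∈ starts, u ∈ c s → u ∈ c s' → s = s') →
          ∀ s ∈ starts, ∀ s' ∈ starts, v ∈ c s → v ∈ c s' → s = s' := by
        intro v ih s hsS s' hs'S hvs hvs'
        have hpred : ∀ t, t ∈ starts → v ∈ c t →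
            v = t ∨ ∃ u ∈ c t, u ∉ N.X ∧ g u = v := by
          intro t htS hvt
          rcases step_prev' (hchain t) v hvt with h | h
          · left
            rw [hhead t] at h
            exact (Option.some_inj.mp h).symm
          · right; exact h
        rcases hpred s hsS hvs with h1 | ⟨u, hu, huX, hgu⟩
        · rcases hpred s' hs'S hvs' with h2 | ⟨u', hu', hu'X, hgu'⟩
          · rw [← h1, ← h2]
          · exact absurd (hgu'.trans h1) ((hstarts s).mp hsS u' hu'X)
        · rcases hpred s' hs'S hvs' with h2 | ⟨u', hu', hu'X, hgu'⟩
          · exact absurd (hgu.trans h2) ((hstarts s').mp hs'S u huX)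
          · have hTu : T u v := hgu ▸ hg u huX
            have hTu' : T u' v := hgu' ▸ hg u' hu'X
            have huu : u = u' := hTuniq v u u' hTu hTu'
            subst huu
            exact ih u (Relation.TransGen.single (hTA u v hTu)) s hsS s' hs'S hu hu'
      exact fun v => wf.induction v key
    have hPP : IsPathPartition N (starts.image c) := by
      refine ⟨?_, ?_, ?_⟩
      · intro p hp
        obtain ⟨s, hsS, rfl⟩ := Finset.mem_image.mp hp
        exact ⟨⟨hne s, (hchainT s).imp hTA, hnodup s⟩, hlast s⟩
      · intro p hp q hq hpq x hxp hxq
        obtain ⟨s, hsS, rfl⟩ := Finset.mem_image.mp hp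
        obtain ⟨s', hs'S, rfl⟩ := Finset.mem_image.mp hq
        exact hpq (by rw [disj x s hsS s' hs'S hxp hxq])
      · intro v
        obtain ⟨s, hsS, hv⟩ := cover v
        exact ⟨c s, Finset.mem_image_of_mem c hsS, hv⟩
    have hanti : AntichainIn N N.X := by
      have hfirst : ∀ {a b : V}, Relation.TransGen N.Arc a b → ∃ w, N.Arc a w := by
        intro a b h
        induction h with
        | single h => exact ⟨_, h⟩
        | tail _ _ ih => exact ih
      intro u hu v hv _ htg
      obtain ⟨w, hw⟩ := hfirst htg
      have h0 : {x | N.Arc u x}.ncard = 0 := (N.leaf_iff u).mp hu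
      have he := (Set.ncard_eq_zero (Set.toFinite _)).mp h0
      exact Set.eq_empty_iff_forall_notMem.mp he w hw
    exact ⟨N.X, hanti, starts.image c, hPP, pathPartition_card' N _ hPP⟩
  · rintro ⟨S, -, P, ⟨hpaths, hdisj, hcov⟩, -⟩
    have hroot_no_in : ∀ u, ¬ N.Arc u N.root :=
      fun u hu => N.acyclic N.root (Relation.TransGen.tail' (N.reach u) hu)
    obtain ⟨f, hfspec, hfarc⟩ : ∃ f : V → V,
        (∀ v, (∃ u, ∃ p ∈ P, [u, v] <:+: p) → ∃ p ∈ P, [f v, v] <:+: p) ∧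
        (∀ v, v ≠ N.root → N.Arc (f v) v) := by
      refine ⟨fun v => if h : ∃ u, ∃ p ∈ P, [u, v] <:+: p then h.choose
        else if h2 : ∃ u, N.Arc u v then h2.choose else v, ?_, ?_⟩
      · intro v h
        beta_reduce
        rw [dif_pos h]
        exact h.choose_spec
      · intro v hv
        beta_reduce
        by_cases h : ∃ u, ∃ p ∈ P, [u, v] <:+: p
        · rw [dif_pos h]
          obtain ⟨p, hp, hinf⟩ := h.choose_spec
          exact infix_pair' (hpaths p hp).1.2.1 hinf
        · have h2 : ∃ u, N.Arc u v := by
            rcases (N.reach v).cases_tail with h' | ⟨w, _, hw⟩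
            · exact absurd h' hv
            · exact ⟨w, hw⟩
          rw [dif_neg h, dif_pos h2]
          exact h2.choose_spec
    refine ⟨fun u v => v ≠ N.root ∧ u = f v, ⟨?_, ?_, ?_⟩, ?_⟩
    · rintro u v ⟨hv, rfl⟩
      exact hfarc v hv
    · intro v
      constructor
      · intro h0
        by_contra hv
        have hm : f v ∈ {u | v ≠ N.root ∧ u = f v} := ⟨hv, rfl⟩
        have h0' : ({u | v ≠ N.root ∧ u = f v}).ncard = 0 := h0
        rw [(Set.ncard_eq_zero (Set.toFinite _)).mp h0'] at hm
        exact hm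
      · rintro rfl
        show ({u | N.root ≠ N.root ∧ u = f N.root}).ncard = 0
        have he : {u | N.root ≠ N.root ∧ u = f N.root} = ∅ := by
          ext u; simp
        rw [he, Set.ncard_empty]
    · intro v hv
      show ({u | v ≠ N.root ∧ u = f v}).ncard = 1
      have he : {u | v ≠ N.root ∧ u = f v} = {f v} := by
        ext u; simp [hv]
      rw [he, Set.ncard_singleton]
    · intro v h0
      obtain ⟨p, hp, hvp⟩ := hcov v
      rcases last_or_succ' hvp with hlastv | ⟨w, hw⟩
      · obtain ⟨x, hxX, hxl⟩ := (hpaths p hp).2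
        rw [hlastv] at hxl
        have hvx := Option.some_inj.mp hxl
        rw [hvx]
        exact hxX
      · exfalso
        have harc : N.Arc v w := infix_pair' (hpaths p hp).1.2.1 hw
        have hwroot : w ≠ N.root := fun h => hroot_no_in v (h ▸ harc)
        have hfw : f w = v := by
          obtain ⟨q, hq, hinf⟩ := hfspec w ⟨v, p, hp, hw⟩
          have hqp : q = p := by
            by_contra hne
            exact hdisj q hq p hp hne w (hinf.subset (by simp)) (hw.subset (by simp))
          rw [hqp] at hinf
          exact pred_unique' (hpaths p hp).1.2.2 hinf hw
        have hm : w ∈ {u | u ≠ N.root ∧ v = f u} := ⟨hwroot, hfw.symm⟩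
        have h0' : ({u | u ≠ N.root ∧ v = f u}).ncard = 0 := h0
        rw [(Set.ncard_eq_zero (Set.toFinite _)).mp h0'] at hm
        exact hm
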